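/- Let W(x,y) = p(x) · 1{|x−y| > a} on ℝ×ℝ, where p(x) = (2π)^{-1/2} e^{-x²/2} and a > 0. Then the second iterate kernel W^{(2)}(x,y) = ∫_ℝ W(x,u) W(u,y) du satisfies W^{(2)}(x,y) ≥ c·p(x) for all x, y ∈ ℝ, where c = ∫_ℝ 1{|u| > 2a} p(u) du > 0. -/

import Mathlib

open MeasureTheory Real Set

noncomputable def gkhelp_p (u : ℝ) : ℝ := Real.exp (-u ^ 2 / 2) / Real.sqrt (2 * π)

lemma gkhelp_pos (u : ℝ) : 0 < gkhelp_p u := by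
  unfold gkhelp_p; positivity

lemma gkhelp_int : Integrable gkhelp_p := by
  have h := (integrable_exp_neg_mul_sq (show (0:ℝ) < 1/2 by norm_num)).div_const (Real.sqrt (2*π))
  refine h.congr (Filter.Eventually.of_forall fun u => ?_)
  unfold gkhelp_p
  ring_nf

lemma gkhelp_anti {u v : ℝ} (h : |u| ≤ |v|) : gkhelp_p v ≤ gkhelp_p u := by
  unfold gkhelp_p
  rw [div_le_div_iff_of_pos_right (by positivity)]
  apply Real.exp_le_exp.mpr
  nlinarith [sq_abs u, sq_abs v, abs_nonneg u]

lemma gkhelp_rearrange (a : ℝ) (ha : 0 < a) (E : Set ℝ) (hE : MeasurableSet E)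
    (hvol : volume E ≤ volume (Icc (-(2*a)) (2*a))) :
    ∫ u in E, gkhelp_p u ≤ ∫ u in Icc (-(2*a)) (2*a), gkhelp_p u := by
  set I : Set ℝ := Icc (-(2*a)) (2*a) with hIdef
  have hI : MeasurableSet I := measurableSet_Icc
  have hIvol : volume I ≠ ⊤ := by rw [hIdef, Real.volume_Icc]; exact ENNReal.ofReal_ne_top
  have hEIvol : volume (E ∩ I) ≠ ⊤ :=
    fun h => hIvol (top_le_iff.mp (h ▸ measure_mono inter_subset_right))
  have hdiff : volume (E \ I) ≤ volume (I \ E) := by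
    have h1 : volume (E ∩ I) + volume (E \ I) = volume E := measure_inter_add_diff E hI
    have h2 : volume (E ∩ I) + volume (I \ E) = volume I := by
      rw [inter_comm]; exact measure_inter_add_diff I hE
    rw [← ENNReal.add_le_add_iff_left hEIvol, h1, h2]; exact hvol
  have hIEfin : volume (I \ E) ≠ ⊤ :=
    fun h => hIvol (top_le_iff.mp (h ▸ measure_mono diff_subset))
  have hEdifffin : volume (E \ I) ≠ ⊤ := fun h => hIEfin (top_le_iff.mp (h ▸ hdiff))
  have int1 : ∫ u in E \ I, gkhelp_p u ≤ (volume (E \ I)).toReal * gkhelp_p (2*a) := by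
    have : ∫ u in E \ I, gkhelp_p u ≤ ∫ _ in E \ I, gkhelp_p (2*a) := by
      refine setIntegral_mono_on gkhelp_int.integrableOn
        ((integrableOn_const_iff).mpr (Or.inr (lt_top_iff_ne_top.mpr hEdifffin))) (hE.diff hI)
        fun u hu => gkhelp_anti ?_
      have hu2 := hu.2
      rw [hIdef, mem_Icc, not_and_or, not_le, not_le] at hu2
      rw [abs_of_pos (by linarith : (0:ℝ) < 2*a)]
      rcases hu2 with h | h
      · exact le_abs.mpr (Or.inr (by linarith))
      · exact le_abs.mpr (Or.inl h.le)
    simpa [setIntegral_const, smul_eq_mul, measureReal_def] using this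
  have int2 : (volume (I \ E)).toReal * gkhelp_p (2*a) ≤ ∫ u in I \ E, gkhelp_p u := by
    have : ∫ _ in I \ E, gkhelp_p (2*a) ≤ ∫ u in I \ E, gkhelp_p u := by
      refine setIntegral_mono_on
        ((integrableOn_const_iff).mpr (Or.inr (lt_top_iff_ne_top.mpr hIEfin)))
        gkhelp_int.integrableOn (hI.diff hE) fun u hu => gkhelp_anti ?_
      have hu1 := hu.1
      rw [hIdef, mem_Icc] at hu1
      rw [abs_of_pos (by linarith : (0:ℝ) < 2*a)]
      exact abs_le.mpr ⟨hu1.1, hu1.2⟩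
    simpa [setIntegral_const, smul_eq_mul, measureReal_def] using this
  have hmid : ∫ u in E \ I, gkhelp_p u ≤ ∫ u in I \ E, gkhelp_p u := by
    refine int1.trans (le_trans ?_ int2)
    exact mul_le_mul_of_nonneg_right (ENNReal.toReal_mono hIEfin hdiff) (gkhelp_pos _).le
  calc ∫ u in E, gkhelp_p u
      = (∫ u in E ∩ I, gkhelp_p u) + ∫ u in E \ I, gkhelp_p u :=
        (integral_inter_add_diff hI gkhelp_int.integrableOn).symm
    _ ≤ (∫ u in E ∩ I, gkhelp_p u) + ∫ u in I \ E, gkhelp_p u := by linarith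
    _ = (∫ u in I ∩ E, gkhelp_p u) + ∫ u in I \ E, gkhelp_p u := by rw [inter_comm]
    _ = ∫ u in I, gkhelp_p u := integral_inter_add_diff hE gkhelp_int.integrableOn

/-- For the kernel `W(x,y) = p(x)·1{|x−y| > a}` with `p` the standard Gaussian
density, the second iterate satisfies `W^{(2)}(x,y) ≥ c·p(x)` for all `x, y`, where
`c = ∫ 1{|u| > 2a} p(u) du > 0`. -/
theorem gaussian_kernel_second_iterate_lower_bound (a : ℝ) (ha : 0 < a) :
    (0 < ∫ u : ℝ, if 2 * a < |u| then Real.exp (-u ^ 2 / 2) / Real.sqrt (2 * π) else 0)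
    ∧ ∀ x y : ℝ,
      (∫ u : ℝ, if 2 * a < |u| then Real.exp (-u ^ 2 / 2) / Real.sqrt (2 * π) else 0) *
          (Real.exp (-x ^ 2 / 2) / Real.sqrt (2 * π))
        ≤ ∫ u : ℝ,
            ((Real.exp (-x ^ 2 / 2) / Real.sqrt (2 * π)) * (if a < |x - u| then 1 else 0)) *
            ((Real.exp (-u ^ 2 / 2) / Real.sqrt (2 * π)) * (if a < |u - y| then 1 else 0)) := by
  simp only [show ∀ u : ℝ, Real.exp (-u ^ 2 / 2) / Real.sqrt (2 * π) = gkhelp_p u from fun _ => rfl]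
  set S : Set ℝ := {u | 2 * a < |u|} with hSdef
  have hS : MeasurableSet S := measurableSet_lt measurable_const continuous_abs.measurable
  have hc : (∫ u : ℝ, if 2 * a < |u| then gkhelp_p u else 0) = ∫ u in S, gkhelp_p u := by
    rw [← integral_indicator hS]
    refine integral_congr_ae (Filter.Eventually.of_forall fun u => ?_)
    simp [hSdef, Set.indicator_apply]
  set I : Set ℝ := Icc (-(2*a)) (2*a) with hIdef
  have hScompl : Sᶜ = I := by
    ext u; simp [hSdef, hIdef, mem_Icc, abs_le, not_lt]
  -- positivity
  have hpos : 0 < ∫ u in S, gkhelp_p u := by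
    have hsub : Ioc (2*a) (2*a+1) ⊆ S := fun u hu => by
      have h1 := hu.1
      simp only [hSdef, mem_setOf_eq]
      rw [abs_of_pos (by linarith)]
      exact h1
    have h1 : (volume (Ioc (2*a) (2*a+1))).toReal * gkhelp_p (2*a+1)
        ≤ ∫ u in Ioc (2*a) (2*a+1), gkhelp_p u := by
      have : ∫ _ in Ioc (2*a) (2*a+1), gkhelp_p (2*a+1) ≤ ∫ u in Ioc (2*a) (2*a+1), gkhelp_p u := by
        refine setIntegral_mono_on ((integrableOn_const_iff).mpr (Or.inr ?_))
          gkhelp_int.integrableOn measurableSet_Ioc fun u hu => gkhelp_anti ?_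
        · rw [Real.volume_Ioc]; exact ENNReal.ofReal_lt_top
        · rw [abs_of_pos (by linarith : (0:ℝ) < 2*a+1), abs_of_pos (by linarith [hu.1])]
          exact hu.2
      simpa [setIntegral_const, smul_eq_mul, measureReal_def] using this
    have h2 : (volume (Ioc (2*a) (2*a+1))).toReal = 1 := by
      rw [Real.volume_Ioc, show 2*a+1-2*a = (1:ℝ) by ring, ENNReal.toReal_ofReal (by norm_num)]
    have h3 : (0:ℝ) < (volume (Ioc (2*a) (2*a+1))).toReal * gkhelp_p (2*a+1) := by
      rw [h2, one_mul]; exact gkhelp_pos _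
    have h4 : ∫ u in Ioc (2*a) (2*a+1), gkhelp_p u ≤ ∫ u in S, gkhelp_p u :=
      setIntegral_mono_set gkhelp_int.integrableOn
        (Filter.Eventually.of_forall fun u => (gkhelp_pos u).le) hsub.eventuallyLE
    linarith
  rw [hc]
  refine ⟨hpos, fun x y => ?_⟩
  set A : Set ℝ := {u | a < |x - u|} ∩ {u | a < |u - y|} with hAdef
  have hA : MeasurableSet A := by
    refine MeasurableSet.inter ?_ ?_ <;>
      exact measurableSet_lt measurable_const (by fun_prop)
  have hAc : Aᶜ = Icc (x-a) (x+a) ∪ Icc (y-a) (y+a) := by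
    ext u
    simp only [hAdef, mem_compl_iff, mem_inter_iff, mem_setOf_eq, not_and_or, not_lt,
      mem_union, mem_Icc, abs_le]
    constructor
    · rintro (h | h)
      · exact Or.inl ⟨by linarith [h.1, h.2], by linarith [h.1, h.2]⟩
      · exact Or.inr ⟨by linarith [h.1, h.2], by linarith [h.1, h.2]⟩
    · rintro (h | h)
      · exact Or.inl ⟨by linarith [h.1, h.2], by linarith [h.1, h.2]⟩
      · exact Or.inr ⟨by linarith [h.1, h.2], by linarith [h.1, h.2]⟩
  have hvol : volume Aᶜ ≤ volume I := by
    rw [hAc, hIdef, Real.volume_Icc]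
    calc volume (Icc (x-a) (x+a) ∪ Icc (y-a) (y+a))
        ≤ volume (Icc (x-a) (x+a)) + volume (Icc (y-a) (y+a)) := measure_union_le _ _
      _ = ENNReal.ofReal (2*a) + ENNReal.ofReal (2*a) := by
          rw [Real.volume_Icc, Real.volume_Icc]; ring_nf
      _ ≤ ENNReal.ofReal (2*a - -(2*a)) := by
          rw [← ENNReal.ofReal_add (by linarith) (by linarith)]
          exact ENNReal.ofReal_le_ofReal (by linarith)
  have hkey : ∫ u in Aᶜ, gkhelp_p u ≤ ∫ u in I, gkhelp_p u := gkhelp_rearrange a ha Aᶜ hA.compl hvol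
  have hSA : ∫ u in S, gkhelp_p u ≤ ∫ u in A, gkhelp_p u := by
    have h1 := integral_add_compl hS gkhelp_int
    have h2 := integral_add_compl hA gkhelp_int
    rw [hScompl] at h1
    linarith
  have hint : (∫ u : ℝ, (gkhelp_p x * (if a < |x - u| then 1 else 0)) *
        (gkhelp_p u * (if a < |u - y| then 1 else 0)))
      = gkhelp_p x * ∫ u in A, gkhelp_p u := by
    rw [← integral_indicator hA, ← integral_const_mul]
    congr 1; ext u
    by_cases h1 : a < |x - u| <;> by_cases h2 : a < |u - y| <;>
      simp [hAdef, Set.indicator_apply, h1, h2]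
  rw [hint, mul_comm]
  exact mul_le_mul_of_nonneg_left hSA (gkhelp_pos x).le
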